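/- Let F(x,y) = (y − x²)² + t^r G(x,y) ∈ C[[t]][x,y] with r ≥ 1, G a polynomial quartic in (x,y) not divisible by t, G_0(x,y) not divisible by y − x², and G_0(0,0) ≠ 0. If γ = (γ_x, γ_y) with γ_x, γ_y ∈ C[[t]], γ(0) = (0,0), satisfies F(γ_x, γ_y) = 0, then r is even and γ_y − γ_x² has t-adic order exactly r/2. -/

import Mathlib

/-!
STATEMENT 18: Let `F(x,y) = (y − x²)² + t^r G(x,y) ∈ ℂ[[t]][x,y]` with `r ≥ 1`, `G` a
polynomial quartic in `(x,y)` not divisible by `t`, `G_0(x,y)` not divisible by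
`y − x²`, and `G_0(0,0) ≠ 0`.  If `γ = (γ_x, γ_y)` with `γ_x, γ_y ∈ ℂ[[t]]`,
`γ(0) = (0,0)`, satisfies `F(γ_x, γ_y) = 0`, then `r` is even and `γ_y − γ_x²` has
`t`-adic order exactly `r/2`.

We use `MvPolynomial (Fin 2) ℂ[[t]]` for `G`, with variable `0` standing for `x` and
variable `1` for `y`; `G_0` is obtained by applying the constant-coefficient map to the
coefficients of `G`.
-/

open PowerSeries

theorem order_of_tacnodal_section (r : ℕ) (hr : 1 ≤ r)
    (G : MvPolynomial (Fin 2) (PowerSeries ℂ))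
    (hdeg : G.totalDegree ≤ 4)
    (hGt : ¬ ∀ m, (PowerSeries.X : PowerSeries ℂ) ∣ MvPolynomial.coeff m G)
    (hG0 : ¬ ((MvPolynomial.X 1 - MvPolynomial.X 0 ^ 2 : MvPolynomial (Fin 2) ℂ) ∣
        MvPolynomial.map ((PowerSeries.constantCoeff : PowerSeries ℂ →+* ℂ)) G))
    (hG00 : (PowerSeries.constantCoeff : PowerSeries ℂ →+* ℂ)
        (MvPolynomial.eval (fun _ => (0 : PowerSeries ℂ)) G) ≠ 0)
    (γx γy : PowerSeries ℂ)
    (hx0 : (PowerSeries.constantCoeff : PowerSeries ℂ →+* ℂ) γx = 0)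
    (hy0 : (PowerSeries.constantCoeff : PowerSeries ℂ →+* ℂ) γy = 0)
    (hF : (γy - γx ^ 2) ^ 2 +
        (PowerSeries.X : PowerSeries ℂ) ^ r *
          MvPolynomial.eval (fun i => if i = 0 then γx else γy) G = 0) :
    Even r ∧ (γy - γx ^ 2).order = (r / 2 : ℕ) := by
  set u := γy - γx ^ 2 with hu
  set g := MvPolynomial.eval (fun i : Fin 2 => if i = 0 then γx else γy) G with hg
  -- constant coefficient of g is nonzero
  have hcg : (PowerSeries.constantCoeff : PowerSeries ℂ →+* ℂ) g ≠ 0 := by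
    have h1 : (PowerSeries.constantCoeff : PowerSeries ℂ →+* ℂ) g
        = MvPolynomial.eval₂ ((PowerSeries.constantCoeff : PowerSeries ℂ →+* ℂ))
            (fun i => (PowerSeries.constantCoeff : PowerSeries ℂ →+* ℂ) (if i = 0 then γx else γy)) G := by
      rw [hg, MvPolynomial.eval, MvPolynomial.coe_eval₂Hom,
        MvPolynomial.eval₂_comp_left ((PowerSeries.constantCoeff : PowerSeries ℂ →+* ℂ))]
      rfl
    have h2 : (PowerSeries.constantCoeff : PowerSeries ℂ →+* ℂ) (MvPolynomial.eval (fun _ : Fin 2 => (0 : PowerSeries ℂ)) G)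
        = MvPolynomial.eval₂ ((PowerSeries.constantCoeff : PowerSeries ℂ →+* ℂ))
            (fun i : Fin 2 => (PowerSeries.constantCoeff : PowerSeries ℂ →+* ℂ) (0 : PowerSeries ℂ)) G := by
      rw [MvPolynomial.eval, MvPolynomial.coe_eval₂Hom,
        MvPolynomial.eval₂_comp_left ((PowerSeries.constantCoeff : PowerSeries ℂ →+* ℂ))]
      rfl
    have h3 : (fun i : Fin 2 => (PowerSeries.constantCoeff : PowerSeries ℂ →+* ℂ) (if i = 0 then γx else γy))
        = fun i : Fin 2 => (PowerSeries.constantCoeff : PowerSeries ℂ →+* ℂ) (0 : PowerSeries ℂ) := by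
      funext i
      by_cases h : i = 0 <;> simp [h, hx0, hy0]
    rw [h1, h3, ← h2]
    exact hG00
  have hgne : g ≠ 0 := fun h => hcg (by simp [h])
  have hgord : g.order = 0 := by
    rw [← Nat.cast_zero, PowerSeries.order_eq_nat]
    exact ⟨by simpa using hcg, by omega⟩
  have hune : u ≠ 0 := by
    intro h
    rw [h] at hF
    have : (PowerSeries.X : PowerSeries ℂ) ^ r * g = 0 := by
      have h2 : (0:PowerSeries ℂ) ^ 2 = 0 := by ring
      rw [h2, zero_add] at hF; exact hF
    rcases mul_eq_zero.mp this with h' | h'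
    · exact pow_ne_zero r PowerSeries.X_ne_zero h'
    · exact hgne h'
  have hsq : (PowerSeries.X : PowerSeries ℂ) ^ r * g = (-1) * u * u := by
    have := eq_neg_of_add_eq_zero_right hF
    rw [this]; ring
  have hordneg : (-1 : PowerSeries ℂ).order = 0 := by
    rw [← Nat.cast_zero, PowerSeries.order_eq_nat]
    refine ⟨by simp, by omega⟩
  have hord : (r : ℕ∞) = u.order + u.order := by
    have := congrArg PowerSeries.order hsq
    rw [PowerSeries.order_mul, PowerSeries.order_mul, PowerSeries.order_mul,
      PowerSeries.order_X_pow, hgord, hordneg] at this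
    simpa using this
  obtain ⟨n, hn⟩ : ∃ n : ℕ, u.order = n := by
    have := PowerSeries.order_finite_iff_ne_zero.mpr hune
    cases h : u.order with
    | top => rw [h] at this; simp at this
    | coe n => exact ⟨n, rfl⟩
  rw [hn] at hord
  have h2n : r = n + n := by exact_mod_cast hord
  refine ⟨⟨n, h2n⟩, ?_⟩
  rw [hn]
  congr 1
  omega
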